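/- (Theorem 1, deterministic form.) Let Y ∈ ℝ^n, X ∈ ℝ^{n×p}, and β* ∈ ℝ^p with |supp(β*)| ≤ S. Assume: (i) every column X_j of X satisfies ‖X_j‖₂ ≤ √n; (ii) X satisfies the restricted eigenvalue condition with constant γ > 0 over the cone C(β*); (iii) β* is feasible for the constrained ℓ∞ problem with parameter λ₀ > 0, i.e., (1/√n)‖Y − Xβ*‖_∞ ≤ λ₀; and (iv) β̂ ∈ ℝ^p is feasible, (1/√n)‖Y − Xβ̂‖_∞ ≤ λ₀, with ‖β̂‖₁ ≤ ‖β*‖₁. Then ‖β̂ − β*‖₂ ≤ 4 λ₀ √(S n) / γ. -/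

import Mathlib

open Finset

/-- The maximum absolute entry of a vector in `ℝ^n`. -/
noncomputable def linftyNorm {n : ℕ} (v : Fin n → ℝ) : ℝ := ⨆ i, |v i|

/-- Membership in the cone `C(β*)`: `‖ν_{S₀ᶜ}‖₁ ≤ ‖ν_{S₀}‖₁`, `S₀ = supp(β*)`. -/
def inCone {p : ℕ} (βstar ν : Fin p → ℝ) : Prop :=
  ∑ j ∈ Finset.univ.filter (fun j => βstar j = 0), |ν j|
    ≤ ∑ j ∈ Finset.univ.filter (fun j => βstar j ≠ 0), |ν j|

/-- Feasibility for the constrained ℓ∞ problem: `(1/√n) ‖Y − Xβ‖_∞ ≤ λ₀`. -/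
noncomputable def feasible {n p : ℕ} (Y : Fin n → ℝ) (X : Matrix (Fin n) (Fin p) ℝ)
    (lam₀ : ℝ) (β : Fin p → ℝ) : Prop :=
  (1 / Real.sqrt n) * linftyNorm (fun i => Y i - X.mulVec β i) ≤ lam₀

lemma residual_bound {n p : ℕ} (hn : 0 < n) (Y : Fin n → ℝ)
    (X : Matrix (Fin n) (Fin p) ℝ) (lam₀ : ℝ) (β : Fin p → ℝ)
    (h : feasible Y X lam₀ β) (i : Fin n) :
    |Y i - X.mulVec β i| ≤ lam₀ * Real.sqrt n := by
  have hs : (0:ℝ) < Real.sqrt n := Real.sqrt_pos.mpr (by exact_mod_cast hn)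
  have hL : linftyNorm (fun i => Y i - X.mulVec β i) ≤ lam₀ * Real.sqrt n := by
    have := h
    unfold feasible at this
    rw [div_mul_eq_mul_div, one_mul, div_le_iff₀ hs] at this
    linarith
  have hle : |Y i - X.mulVec β i| ≤ linftyNorm (fun i => Y i - X.mulVec β i) := by
    unfold linftyNorm
    exact le_ciSup (f := fun i => |Y i - X.mulVec β i|) (Finite.bddAbove_range _) i
  linarith

/-- Theorem 1, deterministic form: estimation error bound
`‖β̂ − β*‖₂ ≤ 4 λ₀ √(S n) / γ`. -/
theorem estimation_error_det {n p : ℕ} (hn : 0 < n) (hp : 0 < p)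
    (Y : Fin n → ℝ) (X : Matrix (Fin n) (Fin p) ℝ)
    (βstar βhat : Fin p → ℝ) (S : ℕ) (hS : 0 < S)
    (hsparse : (Finset.univ.filter (fun j => βstar j ≠ 0)).card ≤ S)
    (hcol : ∀ j, Real.sqrt (∑ i, (X i j) ^ 2) ≤ Real.sqrt n)
    (γ : ℝ) (hγ : 0 < γ)
    (hRE : ∀ ν : Fin p → ℝ, inCone βstar ν →
      γ * ∑ j, (ν j) ^ 2 ≤ (1 / (n : ℝ)) * ∑ i, (X.mulVec ν i) ^ 2)
    (lam₀ : ℝ) (hlam₀ : 0 < lam₀)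
    (hfeasStar : feasible Y X lam₀ βstar)
    (hfeasHat : feasible Y X lam₀ βhat)
    (hl1 : ∑ j, |βhat j| ≤ ∑ j, |βstar j|) :
    Real.sqrt (∑ j, (βhat j - βstar j) ^ 2) ≤ 4 * lam₀ * Real.sqrt (S * n) / γ := by
  have hRnonneg : (0:ℝ) ≤ 4 * lam₀ * Real.sqrt (S * n) / γ := by positivity
  by_cases hall : ∀ j, βstar j = 0
  · -- β* = 0, hence β̂ = 0
    have hz : ∀ j, βhat j = 0 := by
      have h0 : ∑ j, |βstar j| = 0 := by
        apply Finset.sum_eq_zero; intro j _; rw [hall j, abs_zero]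
      have h1 : ∑ j, |βhat j| ≤ 0 := by linarith
      intro j
      have := Finset.sum_nonneg (fun j (_ : j ∈ Finset.univ) => abs_nonneg (βhat j))
      have hall0 : ∑ j, |βhat j| = 0 := le_antisymm h1 this
      have := (Finset.sum_eq_zero_iff_of_nonneg
        (fun j (_ : j ∈ Finset.univ) => abs_nonneg (βhat j))).mp hall0 j (Finset.mem_univ j)
      exact abs_eq_zero.mp this
    have : ∑ j, (βhat j - βstar j) ^ 2 = 0 := by
      apply Finset.sum_eq_zero; intro j _; rw [hz j, hall j]; ring
    rw [this, Real.sqrt_zero]; exact hRnonneg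
  · push_neg at hall
    obtain ⟨j₀, hj₀⟩ := hall
    have hnpos : (0:ℝ) < n := by exact_mod_cast hn
    -- Step A : γ ≤ 1
    have hγ1 : γ ≤ 1 := by
      set e : Fin p → ℝ := fun j => if j = j₀ then (1:ℝ) else 0 with he
      have hcone : inCone βstar e := by
        unfold inCone
        have h0 : ∑ j ∈ Finset.univ.filter (fun j => βstar j = 0), |e j| = 0 := by
          apply Finset.sum_eq_zero; intro j hj
          rw [Finset.mem_filter] at hj
          have : j ≠ j₀ := by rintro rfl; exact hj₀ hj.2
          simp [he, this]
        rw [h0]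
        exact Finset.sum_nonneg (fun j _ => abs_nonneg _)
      have := hRE e hcone
      have h1 : ∑ j, (e j) ^ 2 = 1 := by simp [he, Finset.sum_ite_eq']
      have h2 : ∀ i, X.mulVec e i = X i j₀ := by
        intro i; simp [Matrix.mulVec, dotProduct, he, mul_ite, mul_one, mul_zero, Finset.sum_ite_eq']
      rw [h1] at this
      simp only [h2] at this
      have hc : ∑ i, (X i j₀) ^ 2 ≤ n := by
        have := hcol j₀
        have hnn : (0:ℝ) ≤ ∑ i, (X i j₀) ^ 2 := Finset.sum_nonneg (fun i _ => sq_nonneg _)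
        nlinarith [Real.sq_sqrt hnn, Real.sq_sqrt hnpos.le, Real.sqrt_nonneg (∑ i, (X i j₀) ^ 2), Real.sqrt_nonneg (n:ℝ)]
      calc γ = γ * 1 := (mul_one γ).symm
        _ ≤ (1 / (n:ℝ)) * ∑ i, (X i j₀) ^ 2 := this
        _ ≤ (1 / (n:ℝ)) * n := by
            apply mul_le_mul_of_nonneg_left hc (by positivity)
        _ = 1 := by field_simp
    -- ν := βhat - βstar is in the cone
    set ν : Fin p → ℝ := fun j => βhat j - βstar j with hν
    have hcone : inCone βstar ν := by
      unfold inCone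
      have hsplit : ∀ f : Fin p → ℝ,
          ∑ j ∈ Finset.univ.filter (fun j => βstar j = 0), f j
            + ∑ j ∈ Finset.univ.filter (fun j => βstar j ≠ 0), f j = ∑ j, f j := by
        intro f
        simpa using Finset.sum_filter_add_sum_filter_not Finset.univ (fun j => βstar j = 0) f
      have hz : ∑ j ∈ Finset.univ.filter (fun j => βstar j = 0), |ν j|
          = ∑ j ∈ Finset.univ.filter (fun j => βstar j = 0), |βhat j| := by
        apply Finset.sum_congr rfl; intro j hj
        rw [Finset.mem_filter] at hj
        simp [hν, hj.2]
      have hzstar : ∑ j ∈ Finset.univ.filter (fun j => βstar j = 0), |βstar j| = 0 := by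
        apply Finset.sum_eq_zero; intro j hj
        rw [Finset.mem_filter] at hj; rw [hj.2, abs_zero]
      have key : ∑ j ∈ Finset.univ.filter (fun j => βstar j ≠ 0), (|βstar j| - |βhat j|)
          ≤ ∑ j ∈ Finset.univ.filter (fun j => βstar j ≠ 0), |ν j| := by
        apply Finset.sum_le_sum; intro j _
        have : |βstar j| - |βhat j| ≤ |βstar j - βhat j| := abs_sub_abs_le_abs_sub _ _
        rw [hν]; rw [abs_sub_comm] at this; simpa using this
      have h1 := hsplit (fun j => |βhat j|)
      have h2 := hsplit (fun j => |βstar j|)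
      rw [Finset.sum_sub_distrib] at key
      rw [hz]
      linarith
    -- RE + residual bounds
    have hre := hRE ν hcone
    have hXν : ∀ i, |X.mulVec ν i| ≤ 2 * lam₀ * Real.sqrt n := by
      intro i
      have h1 := residual_bound hn Y X lam₀ βstar hfeasStar i
      have h2 := residual_bound hn Y X lam₀ βhat hfeasHat i
      have : X.mulVec ν i = (Y i - X.mulVec βstar i) - (Y i - X.mulVec βhat i) := by
        have : X.mulVec ν = X.mulVec βhat - X.mulVec βstar := by
          rw [hν]
          exact X.mulVec_sub βhat βstar
        rw [this]; simp only [Pi.sub_apply]; ring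
      rw [this]
      calc |(Y i - X.mulVec βstar i) - (Y i - X.mulVec βhat i)|
          ≤ |Y i - X.mulVec βstar i| + |Y i - X.mulVec βhat i| := abs_sub _ _
        _ ≤ 2 * lam₀ * Real.sqrt n := by linarith
    have hsum : ∑ i, (X.mulVec ν i) ^ 2 ≤ n * (4 * lam₀ ^ 2 * n) := by
      have : ∀ i ∈ Finset.univ, (X.mulVec ν i) ^ 2 ≤ 4 * lam₀ ^ 2 * n := by
        intro i _
        have h := hXν i
        have habs := abs_nonneg (X.mulVec ν i)
        nlinarith [Real.sq_sqrt hnpos.le, sq_abs (X.mulVec ν i), Real.sqrt_nonneg (n:ℝ)]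
      calc ∑ i, (X.mulVec ν i) ^ 2 ≤ ∑ _i : Fin n, (4 * lam₀ ^ 2 * (n:ℝ)) :=
            Finset.sum_le_sum this
        _ = n * (4 * lam₀ ^ 2 * n) := by rw [Finset.sum_const, Finset.card_univ, Fintype.card_fin]; ring
    have hbound : γ * ∑ j, (ν j) ^ 2 ≤ 4 * lam₀ ^ 2 * n := by
      calc γ * ∑ j, (ν j) ^ 2 ≤ (1 / (n:ℝ)) * ∑ i, (X.mulVec ν i) ^ 2 := hre
        _ ≤ (1 / (n:ℝ)) * (n * (4 * lam₀ ^ 2 * n)) :=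
            mul_le_mul_of_nonneg_left hsum (by positivity)
        _ = 4 * lam₀ ^ 2 * n := by field_simp
    -- conclude
    have hSn : (1:ℝ) ≤ S := by exact_mod_cast hS
    have hq : Real.sqrt ((S:ℝ) * n) ^ 2 = (S:ℝ) * n := Real.sq_sqrt (by positivity)
    have hfinal : ∑ j, (ν j) ^ 2 ≤ (4 * lam₀ * Real.sqrt (S * n) / γ) ^ 2 := by
      have hrhs : (4 * lam₀ * Real.sqrt ((S:ℝ) * n) / γ) ^ 2
          = 16 * lam₀ ^ 2 * ((S:ℝ) * n) / γ ^ 2 := by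
        rw [div_pow, mul_pow, mul_pow, hq]; ring
      rw [hrhs]
      have hsum2 : ∑ j, (ν j) ^ 2 ≤ 4 * lam₀ ^ 2 * n / γ := by
        rw [le_div_iff₀ hγ]; linarith [hbound]
      have h4S : γ ≤ 4 * (S:ℝ) := by linarith
      calc ∑ j, (ν j) ^ 2 ≤ 4 * lam₀ ^ 2 * n / γ := hsum2
        _ ≤ 16 * lam₀ ^ 2 * ((S:ℝ) * n) / γ ^ 2 := by
            rw [div_le_div_iff₀ hγ (by positivity)]
            have key : 0 ≤ 4 * lam₀ ^ 2 * (n:ℝ) * γ * (4 * (S:ℝ) - γ) := by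
              have h1 : (0:ℝ) ≤ 4 * lam₀ ^ 2 * (n:ℝ) * γ := by positivity
              have h2 : (0:ℝ) ≤ 4 * (S:ℝ) - γ := by linarith
              exact mul_nonneg h1 h2
            nlinarith [key]
    calc Real.sqrt (∑ j, (βhat j - βstar j) ^ 2)
        ≤ Real.sqrt ((4 * lam₀ * Real.sqrt (S * n) / γ) ^ 2) := Real.sqrt_le_sqrt hfinal
      _ = 4 * lam₀ * Real.sqrt (S * n) / γ := Real.sqrt_sq hRnonneg
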